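/- Let A, Z be disjoint finite nonempty vertex sets in a graph with edge set E, and let resistances be i.i.d. with law ν = (1/2)δ_a + (1/2)δ_b, 0 < a ≤ b < ∞. Define f(r) = R_r(A↔Z) (effective resistance) and assume a unique unit minimizing flow θ_r with |θ_r(e)| ≤ 1 for all e. Then Σ_{e∈E} ‖Δ_e f‖₂² ≤ ((b-a)²/(2a)) · E[f], where Δ_e f(r) = (f(r) - f(σ_e r))/2 and σ_e flips the resistance at edge e between a and b. -/

import Mathlib

open MeasureTheory ProbabilityTheory Filter Real
open scoped Classical

noncomputable section

/-- An unoriented multigraph presented by a choice of orientation for each edge: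
`src e` and `tgt e` are the two endpoints of the edge `e`. -/
structure Network (V E : Type*) where
  src : E → V
  tgt : E → V

namespace Network

variable {V E : Type*}

/-- The net flow out of vertex `x`, where `θ e` is the (signed) flow along edge `e`
from `src e` to `tgt e`.  (This encodes an antisymmetric function on oriented edges.) -/
def flowAt (N : Network V E) (θ : E → ℝ) (x : V) : ℝ :=
  ∑' e : E, ((if N.src e = x then θ e else 0) - (if N.tgt e = x then θ e else 0))

/-- `θ` is a flow of strength `1` from the source set `A` to the sink set `Z`:
it satisfies the node law outside `A ∪ Z` and the total flow out of `A` is `1`. -/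
structure IsUnitFlow (N : Network V E) (θ : E → ℝ) (A Z : Set V) : Prop where
  node : ∀ x, x ∉ A → x ∉ Z → N.flowAt θ x = 0
  strength : ∑' x : A, N.flowAt θ x = 1

/-- The energy `∑ r_e θ(e)²` of a flow `θ` with respect to resistances `r`. -/
def energy (r θ : E → ℝ) : ℝ := ∑' e : E, r e * θ e ^ 2

/-- The effective resistance between `A` and `Z`:
the infimum of the energy over all unit flows from `A` to `Z`. -/
def effRes (N : Network V E) (r : E → ℝ) (A Z : Set V) : ℝ :=
  sInf {c | ∃ θ : E → ℝ, N.IsUnitFlow θ A Z ∧ c = energy r θ}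

end Network

/-- The coordinates of `μ` are i.i.d. with the symmetric Bernoulli law
`(1/2)δ_a + (1/2)δ_b`. -/
def IsBernoulliIID (E : Type*) (μ : Measure (E → ℝ)) (a b : ℝ) : Prop :=
  IsProbabilityMeasure μ ∧
  iIndepFun (fun e (ω : E → ℝ) => ω e) μ ∧
  ∀ e : E, μ.map (fun ω => ω e)
    = (2⁻¹ : ENNReal) • Measure.dirac a + (2⁻¹ : ENNReal) • Measure.dirac b

/-- Flip the resistance of edge `e` between the two values `a` and `b`. -/
def flipEdge {E : Type*} [DecidableEq E] (a b : ℝ) (r : E → ℝ) (e : E) : E → ℝ :=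
  Function.update r e (a + b - r e)

/-- The discrete gradient `Δ_e f (r) = (f(r) - f(σ_e r))/2`. -/
def grad {E : Type*} [DecidableEq E] (a b : ℝ) (f : (E → ℝ) → ℝ) (e : E) (r : E → ℝ) : ℝ :=
  (f r - f (flipEdge a b r e)) / 2

namespace SumSqGradAux

variable {E : Type*}

/-- Sets of configurations determined by countably many coordinates. -/
def detSets (E : Type*) : MeasurableSpace (E → ℝ) where
  MeasurableSet' A := ∃ C : Set E, C.Countable ∧
    ∀ r r' : E → ℝ, (∀ e ∈ C, r e = r' e) → (r ∈ A ↔ r' ∈ A)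
  measurableSet_empty := ⟨∅, Set.countable_empty, fun _ _ _ => Iff.rfl⟩
  measurableSet_compl := by
    rintro A ⟨C, hC, hdet⟩
    exact ⟨C, hC, fun r r' h => by simp [hdet r r' h]⟩
  measurableSet_iUnion := by
    rintro g hg
    choose C hC hdet using hg
    refine ⟨⋃ n, C n, Set.countable_iUnion hC, fun r r' h => ?_⟩
    simp only [Set.mem_iUnion]
    exact exists_congr fun n => hdet n r r' fun e he => h e (Set.mem_iUnion.2 ⟨n, he⟩)

lemma pi_le_detSets : (MeasurableSpace.pi : MeasurableSpace (E → ℝ)) ≤ detSets E := by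
  rw [MeasurableSpace.pi]
  refine iSup_le fun e => ?_
  rintro A ⟨B, _, rfl⟩
  exact ⟨{e}, Set.countable_singleton e, fun r r' h => by
    simp only [Set.mem_preimage, h e (Set.mem_singleton e)]⟩

lemma measurableSet_det {A : Set (E → ℝ)} (hA : MeasurableSet A) :
    ∃ C : Set E, C.Countable ∧
      ∀ r r' : E → ℝ, (∀ e ∈ C, r e = r' e) → (r ∈ A ↔ r' ∈ A) :=
  pi_le_detSets A hA

lemma measurable_det {g : (E → ℝ) → ℝ} (hg : Measurable g) :
    ∃ C : Set E, C.Countable ∧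
      ∀ r r' : E → ℝ, (∀ e ∈ C, r e = r' e) → g r = g r' := by
  have h : ∀ q : ℚ, ∃ C : Set E, C.Countable ∧
      ∀ r r' : E → ℝ, (∀ e ∈ C, r e = r' e) →
        (r ∈ g ⁻¹' Set.Ioi (q : ℝ) ↔ r' ∈ g ⁻¹' Set.Ioi (q : ℝ)) :=
    fun q => measurableSet_det (hg measurableSet_Ioi)
  choose C hC hdet using h
  refine ⟨⋃ q, C q, Set.countable_iUnion hC, fun r r' h => ?_⟩
  have key : ∀ q : ℚ, (q : ℝ) < g r ↔ (q : ℝ) < g r' := fun q =>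
    hdet q r r' fun e he => h e (Set.mem_iUnion.2 ⟨q, he⟩)
  by_contra hne
  rcases lt_or_gt_of_ne hne with hlt | hlt
  · obtain ⟨q, hq1, hq2⟩ := exists_rat_btwn hlt
    exact absurd hq1 (not_lt_of_gt ((key q).2 hq2))
  · obtain ⟨q, hq1, hq2⟩ := exists_rat_btwn hlt
    exact absurd hq1 (not_lt_of_gt ((key q).1 hq2))



variable {E : Type*}

/-- The symmetric two-point Bernoulli law on `ℝ`. -/
def bern (a b : ℝ) : Measure ℝ :=
  (2⁻¹ : ENNReal) • Measure.dirac a + (2⁻¹ : ENNReal) • Measure.dirac b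

instance bern_prob (a b : ℝ) : IsProbabilityMeasure (bern a b) := by
  constructor
  simp [bern, Measure.add_apply, Measure.smul_apply]
  rw [ENNReal.inv_two_add_inv_two]

lemma bern_apply (a b : ℝ) {B : Set ℝ} (hB : MeasurableSet B) :
    bern a b B = 2⁻¹ * B.indicator 1 a + 2⁻¹ * B.indicator 1 b := by
  simp [bern, Measure.add_apply, Measure.smul_apply, Measure.dirac_apply' _ hB, smul_eq_mul]

section Measure

variable {μ : Measure (E → ℝ)} {a b : ℝ}
variable (hmarg : ∀ e : E, μ.map (fun ω => ω e) = bern a b)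

include hmarg in
lemma marginal_apply (e : E) {B : Set ℝ} (hB : MeasurableSet B) :
    μ ((fun r : E → ℝ => r e) ⁻¹' B) = bern a b B := by
  rw [← hmarg e, Measure.map_apply (measurable_pi_apply e) hB]

include hmarg in
lemma coord_ne_null (e : E) :
    μ {r : E → ℝ | ¬ (r e = a ∨ r e = b)} = 0 := by
  have hB : MeasurableSet ({a, b} : Set ℝ)ᶜ := (MeasurableSet.insert (measurableSet_singleton b) a).compl
  have : {r : E → ℝ | ¬ (r e = a ∨ r e = b)} = (fun r : E → ℝ => r e) ⁻¹' (({a, b} : Set ℝ)ᶜ) := by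
    ext r; simp [Set.mem_preimage, Set.mem_compl_iff, not_or]
  rw [this, marginal_apply hmarg e hB, bern_apply a b hB]
  rw [Set.indicator_of_notMem (by simp), Set.indicator_of_notMem (by simp)]
  simp

include hmarg in
lemma omega_null {C : Set E} (hC : C.Countable) :
    μ {r : E → ℝ | ¬ ∀ e ∈ C, r e = a ∨ r e = b} = 0 := by
  haveI := hC.to_subtype
  have hsub : {r : E → ℝ | ¬ ∀ e ∈ C, r e = a ∨ r e = b} ⊆
      ⋃ e : C, {r : E → ℝ | ¬ (r (e : E) = a ∨ r (e : E) = b)} := by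
    intro r hr
    push_neg at hr
    obtain ⟨e, he, hne⟩ := hr
    exact Set.mem_iUnion.2 ⟨⟨e, he⟩, by simpa using hne⟩
  exact measure_mono_null hsub (measure_iUnion_null fun e => coord_ne_null hmarg e)

include hmarg in
/-- Any measurable set of positive measure determined by countably many coordinates
contains a point all of whose coordinates are `a` or `b`. -/
lemma exists_S_point {T : Set (E → ℝ)} {C : Set E} (hC : C.Countable)
    (hdet : ∀ r r' : E → ℝ, (∀ e ∈ C, r e = r' e) → (r ∈ T ↔ r' ∈ T))
    (hT : μ T ≠ 0) :
    ∃ r ∈ T, ∀ e, r e = a ∨ r e = b := by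
  have h1 : μ (T \ {r : E → ℝ | ¬ ∀ e ∈ C, r e = a ∨ r e = b}) = μ T :=
    measure_diff_null (omega_null hmarg hC)
  have h2 : (T \ {r : E → ℝ | ¬ ∀ e ∈ C, r e = a ∨ r e = b}).Nonempty := by
    rw [Set.nonempty_iff_ne_empty]
    intro hemp
    rw [hemp, measure_empty] at h1
    exact hT h1.symm
  obtain ⟨r₀, hr₀T, hr₀Ω⟩ := h2
  simp only [Set.mem_setOf_eq, not_not] at hr₀Ω
  refine ⟨fun e => if e ∈ C then r₀ e else b, ?_, ?_⟩
  · exact (hdet r₀ _ (fun e he => by simp [he])).1 hr₀T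
  · intro e
    by_cases he : e ∈ C
    · simpa [he] using hr₀Ω e he
    · simp [he]

include hmarg in
/-- Transfer of pointwise inequalities on the `{a,b}`-configurations to a.e. inequalities,
for a.e. strongly measurable functions. -/
lemma ae_le_of_le_on_S {g₁ g₂ : (E → ℝ) → ℝ}
    (h₁ : AEStronglyMeasurable g₁ μ) (h₂ : AEStronglyMeasurable g₂ μ)
    (hS : ∀ r : E → ℝ, (∀ e, r e = a ∨ r e = b) → g₁ r ≤ g₂ r) :
    g₁ ≤ᵐ[μ] g₂ := by
  set m₁ := h₁.mk g₁ with hm₁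
  set m₂ := h₂.mk g₂ with hm₂
  have hae₁ := h₁.ae_eq_mk
  have hae₂ := h₂.ae_eq_mk
  set N₁ := toMeasurable μ {r | g₁ r ≠ m₁ r} with hN₁
  set N₂ := toMeasurable μ {r | g₂ r ≠ m₂ r} with hN₂
  have hN₁0 : μ N₁ = 0 := by
    rw [hN₁, measure_toMeasurable]
    exact hae₁
  have hN₂0 : μ N₂ = 0 := by
    rw [hN₂, measure_toMeasurable]
    exact hae₂
  have hUm : MeasurableSet {r | ¬ m₁ r ≤ m₂ r} := by
    have : {r | ¬ m₁ r ≤ m₂ r} = {r | m₂ r < m₁ r} := by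
      ext r; simp [not_le]
    rw [this]
    exact measurableSet_lt h₂.measurable_mk h₁.measurable_mk
  have hU0 : μ {r | ¬ m₁ r ≤ m₂ r} = 0 := by
    by_contra hU
    set T := {r | ¬ m₁ r ≤ m₂ r} \ (N₁ ∪ N₂) with hT
    have hTμ : μ T ≠ 0 := by
      rw [hT, measure_diff_null (by rw [measure_union_null_iff]; exact ⟨hN₁0, hN₂0⟩)]
      exact hU
    obtain ⟨D₁, hD₁c, hD₁⟩ := measurable_det h₁.measurable_mk
    obtain ⟨D₂, hD₂c, hD₂⟩ := measurable_det h₂.measurable_mk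
    obtain ⟨DN₁, hDN₁c, hDN₁⟩ := measurableSet_det (measurableSet_toMeasurable μ _)
    obtain ⟨DN₂, hDN₂c, hDN₂⟩ := measurableSet_det (measurableSet_toMeasurable μ _)
    have hdetT : ∀ r r' : E → ℝ, (∀ e ∈ D₁ ∪ D₂ ∪ DN₁ ∪ DN₂, r e = r' e) → (r ∈ T ↔ r' ∈ T) := by
      intro r r' h
      have e₁ : m₁ r = m₁ r' := hD₁ r r' fun e he => h e (by simp [he])
      have e₂ : m₂ r = m₂ r' := hD₂ r r' fun e he => h e (by simp [he])
      have e₃ : r ∈ N₁ ↔ r' ∈ N₁ := hDN₁ r r' fun e he => h e (by simp [he])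
      have e₄ : r ∈ N₂ ↔ r' ∈ N₂ := hDN₂ r r' fun e he => h e (by simp [he])
      simp only [hT, Set.mem_diff, Set.mem_setOf_eq, Set.mem_union, e₁, e₂, e₃, e₄]
    obtain ⟨r, hrT, hrS⟩ := exists_S_point hmarg
      (((hD₁c.union hD₂c).union hDN₁c).union hDN₂c) hdetT hTμ
    rw [hT, Set.mem_diff, Set.mem_union] at hrT
    obtain ⟨hru, hrn⟩ := hrT
    push_neg at hrn
    have hg₁ : g₁ r = m₁ r := by
      by_contra hne
      exact hrn.1 (subset_toMeasurable μ _ hne)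
    have hg₂ : g₂ r = m₂ r := by
      by_contra hne
      exact hrn.2 (subset_toMeasurable μ _ hne)
    exact hru (hg₁ ▸ hg₂ ▸ hS r hrS)
  filter_upwards [hae₁, hae₂, measure_eq_zero_iff_ae_notMem.1 hU0] with r h1 h2 h3
  rw [h1, h2]
  simpa using h3

end Measure

section Part3

variable {E : Type*} [DecidableEq E]

lemma measurable_flipEdge (a b : ℝ) (e : E) :
    Measurable (fun r : E → ℝ => flipEdge a b r e) := by
  apply measurable_pi_lambda
  intro e'
  simp only [flipEdge, Function.update_apply]
  by_cases h : e' = e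
  · simp only [h, if_pos rfl]
    exact measurable_const.sub (measurable_pi_apply e)
  · simp only [if_neg h]
    exact measurable_pi_apply e'

lemma bern_flip_inv (a b : ℝ) {B : Set ℝ} (hB : MeasurableSet B) :
    bern a b ((fun x => a + b - x) ⁻¹' B) = bern a b B := by
  have hpre : MeasurableSet ((fun x : ℝ => a + b - x) ⁻¹' B) :=
    (measurable_const.sub measurable_id) hB
  rw [bern_apply a b hpre, bern_apply a b hB]
  have ha' : a + b - a = b := by ring
  have hb' : a + b - b = a := by ring
  have h1 : ((fun x : ℝ => a + b - x) ⁻¹' B).indicator (1 : ℝ → ENNReal) a = B.indicator 1 b := by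
    simp [Set.indicator_apply, Set.mem_preimage, ha']
  have h2 : ((fun x : ℝ => a + b - x) ⁻¹' B).indicator (1 : ℝ → ENNReal) b = B.indicator 1 a := by
    simp [Set.indicator_apply, Set.mem_preimage, hb']
  rw [h1, h2]
  ring

variable {μ : Measure (E → ℝ)} {a b : ℝ}

/-- The marginal of `μ` on finitely many coordinates is the product Bernoulli measure. -/
lemma marginal_pi [IsProbabilityMeasure μ]
    (hind : iIndepFun (fun e (ω : E → ℝ) => ω e) μ)
    (hmarg : ∀ e : E, μ.map (fun ω => ω e) = bern a b) (I : Finset E) :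
    μ.map (fun r (i : I) => r i) = Measure.pi (fun _ : I => bern a b) := by
  have hres : Measurable (fun (r : E → ℝ) (i : I) => r i) :=
    measurable_pi_lambda _ fun i => measurable_pi_apply _
  refine (Measure.pi_eq fun s hs => ?_).symm
  rw [Measure.map_apply hres (MeasurableSet.univ_pi hs)]
  classical
  set sets : E → Set ℝ := fun e' => if h : e' ∈ I then s ⟨e', h⟩ else Set.univ with hsets
  have hpre : (fun r (i : I) => r i) ⁻¹' Set.univ.pi s
      = ⋂ i ∈ I, (fun r : E → ℝ => r i) ⁻¹' sets i := by
    ext r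
    simp only [Set.mem_preimage, Set.mem_univ_pi, Set.mem_iInter, hsets]
    constructor
    · intro h i hi
      simpa [dif_pos hi] using h ⟨i, hi⟩
    · intro h i
      have := h i i.2
      simpa [dif_pos i.2] using this
  have hsetsm : ∀ i ∈ I, MeasurableSet (sets i) := by
    intro i hi
    simp only [hsets, dif_pos hi]
    exact hs _
  rw [hpre, (iIndepFun_iff_measure_inter_preimage_eq_mul.1 hind) I hsetsm]
  rw [← Finset.prod_coe_sort I (fun i => μ ((fun r : E → ℝ => r i) ⁻¹' sets i))]
  apply Finset.prod_congr rfl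
  intro i _
  rw [marginal_apply hmarg (i : E) (hsetsm (i : E) i.2)]
  congr 1
  simp only [hsets, dif_pos i.2]
  
lemma map_flipEdge_eq [IsProbabilityMeasure μ]
    (hind : iIndepFun (fun e (ω : E → ℝ) => ω e) μ)
    (hmarg : ∀ e : E, μ.map (fun ω => ω e) = bern a b) (e : E) :
    μ.map (fun r => flipEdge a b r e) = μ := by
  classical
  have hσ : Measurable (fun r : E → ℝ => flipEdge a b r e) := measurable_flipEdge a b e
  haveI : IsProbabilityMeasure (μ.map (fun r => flipEdge a b r e)) :=
    Measure.isProbabilityMeasure_map hσ.aemeasurable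
  refine ext_of_generate_finite (measurableCylinders (fun _ : E => ℝ))
    generateFrom_measurableCylinders.symm isPiSystem_measurableCylinders ?_ (by simp)
  intro s hs
  obtain ⟨I, S, hSm, rfl⟩ := (mem_measurableCylinders s).1 hs
  -- the finite-dimensional flip
  set τ : (I → ℝ) → (I → ℝ) := fun v i => if (i : E) = e then a + b - v i else v i with hτ
  have hτm : Measurable τ := by
    apply measurable_pi_lambda
    intro i
    by_cases h : (i : E) = e
    · simp only [hτ, if_pos h]
      exact measurable_const.sub (measurable_pi_apply i)
    · simp only [hτ, if_neg h]
      exact measurable_pi_apply i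
  have hres : Measurable (fun (r : E → ℝ) (i : I) => r i) :=
    measurable_pi_lambda _ fun i => measurable_pi_apply _
  have hcylm : MeasurableSet (cylinder I S) := hres hSm
  have hcomm : ∀ r : E → ℝ, (fun i : I => flipEdge a b r e i) = τ (fun i : I => r i) := by
    intro r
    funext i
    simp only [hτ, flipEdge, Function.update_apply]
    by_cases h : (i : E) = e
    · simp [h]
    · simp [h]
  -- pi bern is invariant under τ
  have hpiinv : (Measure.pi (fun _ : I => bern a b)).map τ = Measure.pi (fun _ : I => bern a b) := by
    refine (Measure.pi_eq fun u hu => ?_).symm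
    rw [Measure.map_apply hτm (MeasurableSet.univ_pi hu)]
    have hpre : τ ⁻¹' Set.univ.pi u = Set.univ.pi
        (fun i : I => if (i : E) = e then (fun x : ℝ => a + b - x) ⁻¹' u i else u i) := by
      ext v
      simp only [Set.mem_preimage, Set.mem_univ_pi, hτ]
      refine forall_congr' fun i => ?_
      by_cases h : (i : E) = e
      · simp [h]
      · simp [h]
    rw [hpre, Measure.pi_pi]
    apply Finset.prod_congr rfl
    intro i _
    by_cases h : (i : E) = e
    · simp only [if_pos h]
      exact bern_flip_inv a b (hu i)
    · simp only [if_neg h]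
  have hmargI := marginal_pi hind hmarg I
  rw [Measure.map_apply hσ hcylm]
  have h1 : (fun r => flipEdge a b r e) ⁻¹' cylinder I S
      = (fun (r : E → ℝ) (i : I) => r i) ⁻¹' (τ ⁻¹' S) := by
    ext r
    show I.restrict (flipEdge a b r e) ∈ S ↔ τ (fun i : I => r i) ∈ S
    have : I.restrict (flipEdge a b r e) = τ (fun i : I => r i) := by
      funext i
      exact congrFun (hcomm r) i
    rw [this]
  rw [h1, ← Measure.map_apply hres (hτm hSm), hmargI,
    ← Measure.map_apply hτm hSm, hpiinv]
  have h2 : (cylinder I S : Set (E → ℝ)) = (fun (r : E → ℝ) (i : I) => r i) ⁻¹' S := rfl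
  rw [h2, ← Measure.map_apply hres hSm, hmargI]

end Part3

section Part4

variable {V E : Type*} [DecidableEq E] (N : Network V E) (A Z : Set V)

/-- The set of energies of unit flows. -/
def ESet (r : E → ℝ) : Set ℝ :=
  {c | ∃ θ : E → ℝ, N.IsUnitFlow θ A Z ∧ c = Network.energy r θ}

lemma effRes_eq_sInf (r : E → ℝ) : N.effRes r A Z = sInf (ESet N A Z r) := rfl

variable {a b : ℝ}

lemma flipEdge_apply_self (r : E → ℝ) (e : E) : flipEdge a b r e e = a + b - r e :=
  Function.update_self _ _ _

lemma flipEdge_apply_ne (r : E → ℝ) {e e' : E} (h : e' ≠ e) : flipEdge a b r e e' = r e' :=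
  Function.update_of_ne h _ _

lemma flipEdge_S {r : E → ℝ} (hr : ∀ e', r e' = a ∨ r e' = b) (e : E) :
    ∀ e', flipEdge a b r e e' = a ∨ flipEdge a b r e e' = b := by
  intro e'
  by_cases h : e' = e
  · subst h
    rw [flipEdge_apply_self]
    rcases hr e' with h' | h'
    · rw [h']; right; ring
    · rw [h']; left; ring
  · rw [flipEdge_apply_ne r h]; exact hr e'

lemma flipEdge_flipEdge (r : E → ℝ) (e : E) : flipEdge a b (flipEdge a b r e) e = r := by
  funext e'
  by_cases h : e' = e
  · subst h
    rw [flipEdge_apply_self, flipEdge_apply_self]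
    ring
  · rw [flipEdge_apply_ne _ h, flipEdge_apply_ne _ h]

lemma S_nonneg (ha : 0 < a) (hab : a ≤ b) {r : E → ℝ} (hr : ∀ e', r e' = a ∨ r e' = b) :
    ∀ e', 0 ≤ r e' := by
  intro e'
  rcases hr e' with h | h <;> rw [h] <;> linarith

lemma S_le_b (ha : 0 < a) (hab : a ≤ b) {r : E → ℝ} (hr : ∀ e', r e' = a ∨ r e' = b) :
    ∀ e', r e' ≤ b := by
  intro e'
  rcases hr e' with h | h <;> rw [h] <;> linarith

lemma S_ge_a (ha : 0 < a) (hab : a ≤ b) {r : E → ℝ} (hr : ∀ e', r e' = a ∨ r e' = b) :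
    ∀ e', a ≤ r e' := by
  intro e'
  rcases hr e' with h | h <;> rw [h] <;> linarith

lemma energy_nonneg {r : E → ℝ} (hr : ∀ e', 0 ≤ r e') (θ' : E → ℝ) :
    0 ≤ Network.energy r θ' :=
  tsum_nonneg fun e' => mul_nonneg (hr e') (sq_nonneg _)

lemma bddBelow_ESet {r : E → ℝ} (hr : ∀ e', 0 ≤ r e') : BddBelow (ESet N A Z r) := by
  refine ⟨0, ?_⟩
  rintro c ⟨θ', _, rfl⟩
  exact energy_nonneg hr θ'

lemma effRes_nonneg {r : E → ℝ} (hr : ∀ e', 0 ≤ r e')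
    {θ₀ : E → ℝ} (hθ₀ : N.IsUnitFlow θ₀ A Z) : 0 ≤ N.effRes r A Z := by
  rw [effRes_eq_sInf]
  refine le_csInf ⟨_, θ₀, hθ₀, rfl⟩ ?_
  rintro c ⟨θ', _, rfl⟩
  exact energy_nonneg hr θ'

lemma effRes_le_energy {r : E → ℝ} (hr : ∀ e', 0 ≤ r e')
    {θ' : E → ℝ} (hθ' : N.IsUnitFlow θ' A Z) :
    N.effRes r A Z ≤ Network.energy r θ' := by
  rw [effRes_eq_sInf]
  exact csInf_le (bddBelow_ESet N A Z hr) ⟨θ', hθ', rfl⟩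

lemma energy_flip_le (ha : 0 < a) (hab : a ≤ b) {r : E → ℝ}
    (hr : ∀ e', r e' = a ∨ r e' = b) (θ' : E → ℝ) (e : E) :
    Network.energy (flipEdge a b r e) θ' ≤ Network.energy r θ' + (b - a) * θ' e ^ 2 := by
  classical
  set f : E → ℝ := fun e' => r e' * θ' e' ^ 2 with hf
  set g : E → ℝ := fun e' => if e' = e then (a + b - 2 * r e) * θ' e ^ 2 else 0 with hg
  have hfg : (fun e' => flipEdge a b r e e' * θ' e' ^ 2) = fun e' => f e' + g e' := by
    funext e'
    by_cases h : e' = e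
    · subst h
      rw [flipEdge_apply_self]
      simp only [hf, hg, if_pos rfl]
      ring
    · rw [flipEdge_apply_ne r h]
      simp only [hf, hg, if_neg h, add_zero]
  have hgs : Summable g := by
    apply summable_of_ne_finset_zero (s := {e})
    intro e' he'
    simp only [Finset.mem_singleton] at he'
    simp only [hg, if_neg he']
  have hcoef : a + b - 2 * r e ≤ b - a := by
    rcases hr e with h | h <;> rw [h] <;> linarith
  have hnn : 0 ≤ (b - a) * θ' e ^ 2 := mul_nonneg (by linarith) (sq_nonneg _)
  by_cases hs : Summable f
  · have hs2 : Summable fun e' => f e' + g e' := hs.add hgs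
    have h1 : Network.energy (flipEdge a b r e) θ' = Network.energy r θ'
        + (a + b - 2 * r e) * θ' e ^ 2 := by
      unfold Network.energy
      rw [hfg, Summable.tsum_add hs hgs]
      congr 1
      simp only [hg]
      exact tsum_ite_eq e _
    rw [h1]
    have := mul_le_mul_of_nonneg_right hcoef (sq_nonneg (θ' e))
    linarith
  · have hns2 : ¬ Summable fun e' => flipEdge a b r e e' * θ' e' ^ 2 := by
      rw [hfg]
      intro hcon
      exact hs (by simpa using hcon.sub hgs)
    unfold Network.energy
    rw [tsum_eq_zero_of_not_summable hs, tsum_eq_zero_of_not_summable hns2]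
    linarith

lemma effRes_eq_zero_of_wild (ha : 0 < a) (hab : a ≤ b) {ψ : E → ℝ}
    (hψ : N.IsUnitFlow ψ A Z) (hns : ¬ Summable (fun e => ψ e ^ 2))
    {r : E → ℝ} (hr : ∀ e', r e' = a ∨ r e' = b) : N.effRes r A Z = 0 := by
  have hrn := S_nonneg ha hab hr
  have hnsr : ¬ Summable (fun e' => r e' * ψ e' ^ 2) := by
    intro hcon
    apply hns
    refine Summable.of_nonneg_of_le (fun e' => sq_nonneg _) (fun e' => ?_) (hcon.mul_left a⁻¹)
    have h1 : a * ψ e' ^ 2 ≤ r e' * ψ e' ^ 2 :=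
      mul_le_mul_of_nonneg_right (S_ge_a ha hab hr e') (sq_nonneg _)
    have h2 := mul_le_mul_of_nonneg_left h1 (inv_nonneg.2 ha.le)
    rwa [inv_mul_cancel_left₀ (ne_of_gt ha)] at h2
  have hzero : Network.energy r ψ = 0 := tsum_eq_zero_of_not_summable hnsr
  apply le_antisymm
  · rw [effRes_eq_sInf]
    exact csInf_le (bddBelow_ESet N A Z hrn) ⟨ψ, hψ, hzero.symm⟩
  · exact effRes_nonneg N A Z hrn hψ

lemma summable_energy (ha : 0 < a) (hab : a ≤ b) {r : E → ℝ}
    (hr : ∀ e', r e' = a ∨ r e' = b) {θ' : E → ℝ} (hsum : Summable (fun e => θ' e ^ 2)) :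
    Summable (fun e' => r e' * θ' e' ^ 2) := by
  refine Summable.of_nonneg_of_le (fun e' => mul_nonneg (S_nonneg ha hab hr e') (sq_nonneg _))
    (fun e' => ?_) (hsum.mul_left b)
  exact mul_le_mul_of_nonneg_right (S_le_b ha hab hr e') (sq_nonneg _)

lemma energy_le_of_eq_on (ha : 0 < a) (hab : a ≤ b) {r r' : E → ℝ}
    (hr : ∀ e', r e' = a ∨ r e' = b) (hr' : ∀ e', r' e' = a ∨ r' e' = b)
    {P : Set E} (hagree : ∀ e' ∈ P, r' e' = r e')
    {θ' : E → ℝ} (hsum : Summable (fun e => θ' e ^ 2)) :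
    Network.energy r' θ' ≤ Network.energy r θ'
      + (b - a) * ∑' e', (Pᶜ).indicator (fun e'' => θ' e'' ^ 2) e' := by
  have hS1 := summable_energy ha hab hr hsum
  have hS1' := summable_energy ha hab hr' hsum
  have hSind : Summable ((Pᶜ).indicator (fun e'' => θ' e'' ^ 2)) := hsum.indicator _
  have hpt : ∀ e', r' e' * θ' e' ^ 2
      ≤ r e' * θ' e' ^ 2 + (b - a) * (Pᶜ).indicator (fun e'' => θ' e'' ^ 2) e' := by
    intro e'
    by_cases hP : e' ∈ P
    · rw [hagree e' hP, Set.indicator_of_notMem (by simp [hP])]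
      simp
    · rw [Set.indicator_of_mem (by simp [hP])]
      have h1 : r' e' ≤ r e' + (b - a) := by
        have := S_le_b ha hab hr' e'
        have := S_ge_a ha hab hr e'
        linarith
      have := mul_le_mul_of_nonneg_right h1 (sq_nonneg (θ' e'))
      linarith [this]
  have := Summable.tsum_le_tsum hpt hS1' (hS1.add (hSind.mul_left (b - a)))
  unfold Network.energy
  rw [Summable.tsum_add hS1 (hSind.mul_left (b - a)), tsum_mul_left] at this
  exact this

end Part4


section MainAux

variable {V E : Type*} [DecidableEq E]

lemma maxsq_add (x : ℝ) : (max x 0)^2 + (max (-x) 0)^2 = x^2 := by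
  rcases le_total x 0 with h | h
  · rw [max_eq_right h, max_eq_left (neg_nonneg.2 h)]
    ring
  · rw [max_eq_left h, max_eq_right (neg_nonpos.2 h)]
    ring

end MainAux

noncomputable def seqAux {E : Type*} (pick : Set E → E × (E → ℝ)) (D : Set E) :
    ℕ → E × (E → ℝ) :=
  fun n => pick (D ∪ ⋃ m ∈ Finset.range n,
    ({(seqAux pick D m).1} ∪ Function.support (seqAux pick D m).2))
  termination_by n => n
  decreasing_by all_goals (simp only [Finset.mem_range] at *; omega)

lemma seqAux_def {E : Type*} (pick : Set E → E × (E → ℝ)) (D : Set E) (n : ℕ) :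
    seqAux pick D n = pick (D ∪ ⋃ m ∈ Finset.range n,
      ({(seqAux pick D m).1} ∪ Function.support (seqAux pick D m).2)) := by
  rw [seqAux]


end SumSqGradAux

set_option maxHeartbeats 2000000 in
open SumSqGradAux in
/-- With i.i.d. Bernoulli `{a,b}` resistances and `f(r) = R_r(A ↔ Z)`, assuming for each
configuration a minimizing unit flow `θ_r` with `|θ_r(e)| ≤ 1` for all `e`, one has
`Σ_e ‖Δ_e f‖₂² ≤ ((b-a)²/(2a)) · E[f]`. -/
theorem sum_sq_grad_le {V E : Type*} [DecidableEq E]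
    (a b : ℝ) (ha : 0 < a) (hab : a ≤ b)
    (N : Network V E) (A Z : Set V)
    (hdisj : Disjoint A Z) (hA : A.Nonempty) (hZ : Z.Nonempty)
    (hAfin : A.Finite) (hZfin : Z.Finite)
    (μ : Measure (E → ℝ)) (hμ : IsBernoulliIID E μ a b)
    (θ : (E → ℝ) → (E → ℝ))
    (hflow : ∀ r : E → ℝ, (∀ e, r e = a ∨ r e = b) → N.IsUnitFlow (θ r) A Z)
    (hmin : ∀ r : E → ℝ, (∀ e, r e = a ∨ r e = b) →
      Network.energy r (θ r) = N.effRes r A Z)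
    (hbdd : ∀ r : E → ℝ, (∀ e, r e = a ∨ r e = b) → ∀ e, |θ r e| ≤ 1) :
    (∑' e : E, ∫ r, (grad a b (fun r => N.effRes r A Z) e r) ^ 2 ∂μ)
      ≤ (b - a) ^ 2 / (2 * a) * ∫ r, N.effRes r A Z ∂μ := by
  classical
  obtain ⟨hprob, hindep, hmarg⟩ := hμ
  haveI := hprob
  have hmarg' : ∀ e : E, μ.map (fun ω => ω e) = bern a b := hmarg
  set f : (E → ℝ) → ℝ := fun r => N.effRes r A Z with hfdef
  -- the reference flow at the all-`a` configuration
  have hraS : ∀ e : E, (fun _ : E => a) e = a ∨ (fun _ : E => a) e = b := fun _ => Or.inl rfl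
  have hθ₀uf : N.IsUnitFlow (θ (fun _ => a)) A Z := hflow _ hraS
  -- pointwise facts on S
  have KEY3 : ∀ r : E → ℝ, (∀ e, r e = a ∨ r e = b) → 0 ≤ f r := by
    intro r hr
    exact effRes_nonneg N A Z (S_nonneg ha hab hr) hθ₀uf
  have KEY5 : ∀ (r : E → ℝ), (∀ e, r e = a ∨ r e = b) → ∀ e,
      f (flipEdge a b r e) ≤ f r + (b - a) * (θ r e)^2 := by
    intro r hr e
    have h1 : f (flipEdge a b r e) ≤ Network.energy (flipEdge a b r e) (θ r) :=
      effRes_le_energy N A Z (S_nonneg ha hab (flipEdge_S hr e)) (hflow r hr)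
    have h2 := energy_flip_le ha hab hr (θ r) e
    have h3 := hmin r hr
    calc f (flipEdge a b r e) ≤ Network.energy (flipEdge a b r e) (θ r) := h1
      _ ≤ Network.energy r (θ r) + (b - a) * (θ r e)^2 := h2
      _ = f r + (b - a) * (θ r e)^2 := by rw [h3]
  -- the positive part of the increment
  set φ : E → (E → ℝ) → ℝ :=
    fun e r => (max (f (flipEdge a b r e) - f r) 0)^2 with hφdef
  have hφnn : ∀ e r, 0 ≤ φ e r := fun e r => sq_nonneg _
  have hsq1 : ∀ (r : E → ℝ), (∀ e, r e = a ∨ r e = b) → ∀ e, (θ r e)^2 ≤ 1 := by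
    intro r hr e
    have := hbdd r hr e
    nlinarith [abs_nonneg (θ r e), sq_abs (θ r e)]
  have KEY2 : ∀ (e : E) (r : E → ℝ), (∀ e', r e' = a ∨ r e' = b) → φ e r ≤ (b - a)^2 := by
    intro e r hr
    have h5 := KEY5 r hr e
    have hθ1 := hsq1 r hr e
    have hub : max (f (flipEdge a b r e) - f r) 0 ≤ b - a := by
      apply max_le _ (by linarith)
      nlinarith [sq_nonneg (θ r e)]
    have hlb : 0 ≤ max (f (flipEdge a b r e) - f r) 0 := le_max_right _ _
    have hre : φ e r = (max (f (flipEdge a b r e) - f r) 0)^2 := rfl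
    rw [hre]
    nlinarith [hub, hlb]
  have KEY1 : ∀ (r : E → ℝ), (∀ e, r e = a ∨ r e = b) → ∀ F : Finset E,
      ∑ e ∈ F, φ e r ≤ (b - a)^2 / a * f r := by
    by_cases hwild : ∃ ψ : E → ℝ, N.IsUnitFlow ψ A Z ∧ ¬ Summable (fun e => ψ e ^ 2)
    · obtain ⟨ψ, hψuf, hψns⟩ := hwild
      intro r hr F
      have hz : ∀ r' : E → ℝ, (∀ e, r' e = a ∨ r' e = b) → f r' = 0 := fun r' hr' =>
        effRes_eq_zero_of_wild N A Z ha hab hψuf hψns hr'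
      have hφz : ∀ e ∈ F, φ e r = 0 := by
        intro e _
        have h1 : φ e r = (max (f (flipEdge a b r e) - f r) 0)^2 := rfl
        rw [h1, hz r hr, hz _ (flipEdge_S hr e)]
        simp
      rw [Finset.sum_congr rfl hφz, Finset.sum_const_zero, hz r hr]
      simp
    · push_neg at hwild
      intro r hr F
      have hθr := hflow r hr
      have hsum : Summable (fun e => θ r e ^ 2) := hwild (θ r) hθr
      have hsume : Summable (fun e' => r e' * θ r e' ^ 2) := summable_energy ha hab hr hsum
      have hsumle : a * ∑ e ∈ F, θ r e ^ 2 ≤ f r := by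
        have h1 : ∑ e ∈ F, a * θ r e ^ 2 ≤ ∑ e ∈ F, r e * θ r e ^ 2 :=
          Finset.sum_le_sum fun e _ =>
            mul_le_mul_of_nonneg_right (S_ge_a ha hab hr e) (sq_nonneg _)
        have h2 : ∑ e ∈ F, r e * θ r e ^ 2 ≤ ∑' e, r e * θ r e ^ 2 :=
          Summable.sum_le_tsum F (fun e _ => mul_nonneg (S_nonneg ha hab hr e) (sq_nonneg _)) hsume
        have h3 : (∑' e, r e * θ r e ^ 2) = f r := hmin r hr
        rw [Finset.mul_sum]
        linarith
      have hφle : ∀ e ∈ F, φ e r ≤ (b - a)^2 * θ r e ^ 2 := by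
        intro e _
        have h5 := KEY5 r hr e
        have hθ1 := hsq1 r hr e
        have hub : max (f (flipEdge a b r e) - f r) 0 ≤ (b - a) * θ r e ^ 2 := by
          apply max_le (by linarith)
          apply mul_nonneg (by linarith) (sq_nonneg _)
        have hlb : 0 ≤ max (f (flipEdge a b r e) - f r) 0 := le_max_right _ _
        have hre : φ e r = (max (f (flipEdge a b r e) - f r) 0)^2 := rfl
        rw [hre]
        calc (max (f (flipEdge a b r e) - f r) 0)^2 ≤ ((b - a) * θ r e ^ 2)^2 := by nlinarith
          _ = (b - a)^2 * θ r e ^ 2 * θ r e ^ 2 := by ring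
          _ ≤ (b - a)^2 * θ r e ^ 2 * 1 := by
              apply mul_le_mul_of_nonneg_left hθ1
              positivity
          _ = (b - a)^2 * θ r e ^ 2 := by ring
      calc ∑ e ∈ F, φ e r ≤ ∑ e ∈ F, (b - a)^2 * θ r e ^ 2 := Finset.sum_le_sum hφle
        _ = (b - a)^2 * ∑ e ∈ F, θ r e ^ 2 := by rw [Finset.mul_sum]
        _ ≤ (b - a)^2 / a * f r := by
            rw [div_mul_eq_mul_div, le_div_iff₀ ha]
            calc ((b - a)^2 * ∑ e ∈ F, θ r e ^ 2) * a
                = (b - a)^2 * (a * ∑ e ∈ F, θ r e ^ 2) := by ring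
              _ ≤ (b - a)^2 * f r := mul_le_mul_of_nonneg_left hsumle (sq_nonneg _)
  have KEY4 : ∃ K : ℝ, 0 ≤ K ∧ ∀ r : E → ℝ, (∀ e, r e = a ∨ r e = b) → f r ≤ K := by
    by_cases hwild : ∃ ψ : E → ℝ, N.IsUnitFlow ψ A Z ∧ ¬ Summable (fun e => ψ e ^ 2)
    · obtain ⟨ψ, hψuf, hψns⟩ := hwild
      exact ⟨0, le_refl 0, fun r hr =>
        le_of_eq (effRes_eq_zero_of_wild N A Z ha hab hψuf hψns hr)⟩
    · push_neg at hwild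
      have hsum0 : Summable (fun e => θ (fun _ => a) e ^ 2) := hwild _ hθ₀uf
      refine ⟨b * ∑' e, θ (fun _ => a) e ^ 2, ?_, ?_⟩
      · apply mul_nonneg (by linarith)
        exact tsum_nonneg fun e => sq_nonneg _
      · intro r hr
        have h1 : f r ≤ Network.energy r (θ (fun _ => a)) :=
          effRes_le_energy N A Z (S_nonneg ha hab hr) hθ₀uf
        have h2 : Network.energy r (θ (fun _ => a)) ≤ b * ∑' e, θ (fun _ => a) e ^ 2 := by
          rw [← tsum_mul_left]
          exact Summable.tsum_le_tsum (fun e =>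
              mul_le_mul_of_nonneg_right (S_le_b ha hab hr e) (sq_nonneg _))
            (summable_energy ha hab hr hsum0) (hsum0.mul_left b)
        linarith
  -- the main identity for the gradient
  have hGid : ∀ (e : E) (r : E → ℝ),
      (grad a b f e r)^2 = (φ e r + φ e (flipEdge a b r e))/4 := by
    intro e r
    have hff : flipEdge a b (flipEdge a b r e) e = r := flipEdge_flipEdge r e
    have h1 : φ e (flipEdge a b r e)
        = (max (f (flipEdge a b (flipEdge a b r e) e) - f (flipEdge a b r e)) 0)^2 := rfl
    rw [hff] at h1
    have h2 : φ e r = (max (f (flipEdge a b r e) - f r) 0)^2 := rfl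
    have h3 : grad a b f e r = (f r - f (flipEdge a b r e))/2 := rfl
    rw [h1, h2, h3]
    have h4 := maxsq_add (f r - f (flipEdge a b r e))
    have hneg : -(f r - f (flipEdge a b r e)) = f (flipEdge a b r e) - f r := by ring
    rw [hneg] at h4
    nlinarith [h4]
  by_cases hf : AEStronglyMeasurable f μ
  · -- main case: `f` is a.e. strongly measurable
    have hf0 : (fun _ : E → ℝ => (0:ℝ)) ≤ᵐ[μ] f :=
      ae_le_of_le_on_S hmarg' aestronglyMeasurable_const hf (fun r hr => KEY3 r hr)
    obtain ⟨K, hK0, hKbd⟩ := KEY4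
    have hfK : f ≤ᵐ[μ] (fun _ => K) :=
      ae_le_of_le_on_S hmarg' hf aestronglyMeasurable_const (fun r hr => hKbd r hr)
    have hfint : Integrable f μ := by
      refine Integrable.mono' (integrable_const K) hf ?_
      filter_upwards [hf0, hfK] with r h1 h2
      rw [Real.norm_eq_abs, abs_le]
      constructor <;> linarith
    have hfI0 : 0 ≤ ∫ r, f r ∂μ := by
      have := integral_mono_ae (integrable_const 0) hfint hf0
      simpa using this
    -- per-edge analysis
    have edge : ∀ e : E, Integrable (φ e) μ ∧ 0 ≤ ∫ r, φ e r ∂μ ∧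
        (∫ r, (grad a b f e r) ^ 2 ∂μ) = 2⁻¹ * ∫ r, φ e r ∂μ := by
      intro e
      have hmap := map_flipEdge_eq hindep hmarg' e
      have hσ : Measurable (fun r : E → ℝ => flipEdge a b r e) := measurable_flipEdge a b e
      have hfσ : AEStronglyMeasurable (fun r => f (flipEdge a b r e)) μ := by
        have h := hf
        rw [← hmap] at h
        exact h.comp_measurable hσ
      have hmax : AEStronglyMeasurable (fun r => max (f (flipEdge a b r e) - f r) 0) μ :=
        (hfσ.sub hf).sup aestronglyMeasurable_const
      have hφae : AEStronglyMeasurable (φ e) μ := by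
        have h2 : (φ e) = fun r => (max (f (flipEdge a b r e) - f r) 0)
            * (max (f (flipEdge a b r e) - f r) 0) := by
          funext r
          have : φ e r = (max (f (flipEdge a b r e) - f r) 0)^2 := rfl
          rw [this]; ring
        rw [h2]
        exact hmax.mul hmax
      have hφbd : (φ e) ≤ᵐ[μ] (fun _ => (b - a)^2) :=
        ae_le_of_le_on_S hmarg' hφae aestronglyMeasurable_const (fun r hr => KEY2 e r hr)
      have hφint : Integrable (φ e) μ := by
        refine Integrable.mono' (integrable_const ((b - a)^2)) hφae ?_
        filter_upwards [hφbd] with r hr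
        rw [Real.norm_eq_abs, abs_of_nonneg (hφnn e r)]
        exact hr
      have hφσae : AEStronglyMeasurable (fun r => φ e (flipEdge a b r e)) μ := by
        have h := hφae
        rw [← hmap] at h
        exact h.comp_measurable hσ
      have hφσint : Integrable (fun r => φ e (flipEdge a b r e)) μ := by
        have h1 : Integrable (φ e) (μ.map (fun r => flipEdge a b r e)) := by
          rw [hmap]; exact hφint
        have := (integrable_map_measure (by rw [hmap]; exact hφae) hσ.aemeasurable).1 h1
        exact this
      have hintσ : ∫ r, φ e (flipEdge a b r e) ∂μ = ∫ r, φ e r ∂μ := by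
        have h1 := integral_map (μ := μ) hσ.aemeasurable
          (f := φ e) (by rw [hmap]; exact hφae)
        rw [hmap] at h1
        exact h1.symm
      refine ⟨hφint, integral_nonneg (hφnn e), ?_⟩
      have hGrw : (fun r => (grad a b f e r)^2)
          = fun r => (φ e r + φ e (flipEdge a b r e))/4 := by
        funext r
        exact hGid e r
      rw [hGrw]
      rw [integral_div, integral_add hφint hφσint, hintσ]
      ring
    -- partial sums
    have hsumF : ∀ F : Finset E,
        ∑ e ∈ F, ∫ r, (grad a b f e r) ^ 2 ∂μ ≤ (b - a)^2/(2*a) * ∫ r, f r ∂μ := by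
      intro F
      have h1 : ∑ e ∈ F, ∫ r, (grad a b f e r) ^ 2 ∂μ
          = 2⁻¹ * ∑ e ∈ F, ∫ r, φ e r ∂μ := by
        rw [Finset.mul_sum]
        exact Finset.sum_congr rfl fun e _ => (edge e).2.2
      have h2 : ∑ e ∈ F, ∫ r, φ e r ∂μ = ∫ r, ∑ e ∈ F, φ e r ∂μ :=
        (integral_finset_sum F fun e _ => (edge e).1).symm
      have hsumint : Integrable (fun r => ∑ e ∈ F, φ e r) μ :=
        integrable_finset_sum F fun e _ => (edge e).1
      have hcf : Integrable (fun r => (b - a)^2/a * f r) μ := hfint.const_mul _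
      have h3 : (fun r => ∑ e ∈ F, φ e r) ≤ᵐ[μ] (fun r => (b - a)^2/a * f r) :=
        ae_le_of_le_on_S hmarg' hsumint.aestronglyMeasurable hcf.aestronglyMeasurable
          (fun r hr => KEY1 r hr F)
      have h4 : ∫ r, ∑ e ∈ F, φ e r ∂μ ≤ ∫ r, (b - a)^2/a * f r ∂μ :=
        integral_mono_ae hsumint hcf h3
      have h5 : ∫ r, (b - a)^2/a * f r ∂μ = (b - a)^2/a * ∫ r, f r ∂μ :=
        integral_const_mul _ _
      rw [h1, h2]
      have h6 : 2⁻¹ * ((b - a)^2/a * ∫ r, f r ∂μ) = (b - a)^2/(2*a) * ∫ r, f r ∂μ := by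
        field_simp
      have h7 : ∫ r, ∑ e ∈ F, φ e r ∂μ ≤ (b - a)^2/a * ∫ r, f r ∂μ := h5 ▸ h4
      calc 2⁻¹ * ∫ r, ∑ e ∈ F, φ e r ∂μ
          ≤ 2⁻¹ * ((b - a)^2/a * ∫ r, f r ∂μ) :=
            mul_le_mul_of_nonneg_left h7 (by norm_num)
        _ = (b - a)^2/(2*a) * ∫ r, f r ∂μ := h6
    have hnn : ∀ e : E, 0 ≤ ∫ r, (grad a b f e r) ^ 2 ∂μ :=
      fun e => integral_nonneg fun r => sq_nonneg _
    have hsummable : Summable (fun e => ∫ r, (grad a b f e r) ^ 2 ∂μ) :=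
      summable_of_sum_le hnn hsumF
    exact Summable.tsum_le_of_sum_le hsummable hsumF
  · -- `f` is not a.e. strongly measurable: both sides vanish
    have hfni : ¬ Integrable f μ := fun h => hf h.aestronglyMeasurable
    have hRHS : ∫ r, f r ∂μ = 0 := integral_undef hfni
    have hLHS : ∀ e : E, ∫ r, (grad a b f e r) ^ 2 ∂μ = 0 := by
      intro e
      by_cases hGi : Integrable (fun r => (grad a b f e r)^2) μ
      swap
      · exact integral_undef hGi
      have hGa : AEStronglyMeasurable (fun r => (grad a b f e r)^2) μ := hGi.aestronglyMeasurable
      by_cases hwild : ∃ ψ : E → ℝ, N.IsUnitFlow ψ A Z ∧ ¬ Summable (fun e' => ψ e' ^ 2)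
      · -- a wild flow exists: `f` vanishes on all `{a,b}`-configurations
        obtain ⟨ψ, hψuf, hψns⟩ := hwild
        have hz : ∀ r' : E → ℝ, (∀ e', r' e' = a ∨ r' e' = b) → f r' = 0 := fun r' hr' =>
          effRes_eq_zero_of_wild N A Z ha hab hψuf hψns hr'
        have hG0 : (fun r => (grad a b f e r)^2) ≤ᵐ[μ] (fun _ => (0:ℝ)) := by
          refine ae_le_of_le_on_S hmarg' hGa aestronglyMeasurable_const ?_
          intro r hr
          have h1 : grad a b f e r = (f r - f (flipEdge a b r e))/2 := rfl
          rw [h1, hz r hr, hz _ (flipEdge_S hr e)]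
          norm_num
        have hG0' : (fun r => (grad a b f e r)^2) =ᵐ[μ] (fun _ => (0:ℝ)) := by
          filter_upwards [hG0] with r hr
          exact le_antisymm hr (sq_nonneg _)
        rw [integral_congr_ae hG0', integral_zero]
      · push_neg at hwild
        set U₂ : Set E := {e' | ∃ ψ₁ ψ₂ : E → ℝ,
          N.IsUnitFlow ψ₁ A Z ∧ N.IsUnitFlow ψ₂ A Z ∧ ψ₁ e' ≠ ψ₂ e'} with hU₂def
        by_cases hU : U₂.Countable
        · -- `f` would be measurable: contradiction with `hf`
          exfalso
          apply hf
          have hθ₀sum : Summable (fun e' => θ (fun _ => a) e' ^ 2) := hwild _ hθ₀uf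
          have hsupp : (Function.support (θ (fun _ => a))).Countable := by
            have h1 : Function.support (fun e' => θ (fun _ => a) e' ^ 2)
                = Function.support (θ (fun _ => a)) := by
              ext e'
              simp [Function.mem_support, pow_eq_zero_iff]
            rw [← h1]
            exact hθ₀sum.countable_support
          set W : Set E := U₂ ∪ Function.support (θ (fun _ => a)) with hWdef
          have hWc : W.Countable := hU.union hsupp
          have hvanish : ∀ ψ' : E → ℝ, N.IsUnitFlow ψ' A Z → ∀ e' ∉ W, ψ' e' = 0 := by
            intro ψ' hψ' e' he'
            rw [hWdef, Set.mem_union] at he'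
            push_neg at he'
            by_contra hne
            by_cases hv : ψ' e' = θ (fun _ => a) e'
            · exact he'.2 (by rw [Function.mem_support, ← hv]; exact hne)
            · exact he'.1 ⟨ψ', θ (fun _ => a), hψ', hθ₀uf, hv⟩
          have hdet : ∀ r r' : E → ℝ, (∀ e' ∈ W, r e' = r' e') → f r = f r' := by
            intro r r' hagree
            have hen : ∀ ψ' : E → ℝ, N.IsUnitFlow ψ' A Z →
                Network.energy r ψ' = Network.energy r' ψ' := by
              intro ψ' hψ'
              apply tsum_congr
              intro e'
              by_cases hW : e' ∈ W
              · rw [hagree e' hW]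
              · rw [hvanish ψ' hψ' e' hW]
                ring
            have hES : ESet N A Z r = ESet N A Z r' := by
              ext c
              constructor
              · rintro ⟨ψ', hψ', rfl⟩
                exact ⟨ψ', hψ', hen ψ' hψ'⟩
              · rintro ⟨ψ', hψ', rfl⟩
                exact ⟨ψ', hψ', (hen ψ' hψ').symm⟩
            show N.effRes r A Z = N.effRes r' A Z
            rw [effRes_eq_sInf, effRes_eq_sInf, hES]
          haveI : Countable ↥W := hWc.to_subtype
          set cfg : (↥W → Bool) → (E → ℝ) := fun t e' =>
            if h : e' ∈ W then (if t ⟨e', h⟩ then b else a) else b with hcfgdef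
          have hcfgS : ∀ t, ∀ e', cfg t e' = a ∨ cfg t e' = b := by
            intro t e'
            rw [hcfgdef]
            by_cases h : e' ∈ W
            · simp only [dif_pos h]
              by_cases ht : t ⟨e', h⟩
              · right; simp [ht]
              · left; simp [ht]
            · right; simp [dif_neg h]
          set Gf : (↥W → Bool) → ℝ := fun t => f (cfg t) with hGfdef
          have husc : UpperSemicontinuous Gf := by
            intro t c hc
            have hrtS := hcfgS t
            have hψsum : Summable (fun e' => θ (cfg t) e' ^ 2) := hwild _ (hflow (cfg t) hrtS)
            have hba1 : (0:ℝ) < b - a + 1 := by linarith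
            have hε : 0 < (c - Gf t)/(b - a + 1) := div_pos (by linarith) hba1
            obtain ⟨F, hF⟩ : ∃ F : Finset E,
                ∑' (x : {e' : E // e' ∉ F}), θ (cfg t) (x : E) ^ 2 < (c - Gf t)/(b - a + 1) := by
              have htend := tendsto_tsum_compl_atTop_zero (fun e' => θ (cfg t) e' ^ 2)
              exact (htend.eventually_lt_const hε).exists
            have hIfin : ({i : ↥W | (i : E) ∈ F}).Finite :=
              Set.Finite.preimage Subtype.val_injective.injOn F.finite_toSet
            have hVopen : IsOpen (Set.pi {i : ↥W | (i : E) ∈ F} (fun i => {t i})) :=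
              isOpen_set_pi hIfin (fun i _ => isOpen_discrete _)
            have htV : t ∈ Set.pi {i : ↥W | (i : E) ∈ F} (fun i => {t i}) := fun i _ => rfl
            filter_upwards [hVopen.mem_nhds htV] with t' ht'
            have hagree : ∀ e' ∈ (↑F : Set E), cfg t' e' = cfg t e' := by
              intro e' he'
              show (if h : e' ∈ W then (if t' ⟨e', h⟩ then b else a) else b)
                = (if h : e' ∈ W then (if t ⟨e', h⟩ then b else a) else b)
              by_cases h : e' ∈ W
              · simp only [dif_pos h]
                rw [ht' ⟨e', h⟩ he']
              · simp [dif_neg h]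
            have h1 : f (cfg t') ≤ Network.energy (cfg t') (θ (cfg t)) :=
              effRes_le_energy N A Z (S_nonneg ha hab (hcfgS t')) (hflow (cfg t) hrtS)
            have h2 := energy_le_of_eq_on (a := a) (b := b) ha hab hrtS (hcfgS t')
              (P := (↑F : Set E)) hagree hψsum
            have h3 : (∑' e', ((↑F : Set E)ᶜ).indicator (fun e'' => θ (cfg t) e'' ^ 2) e')
                = ∑' (x : {e' : E // e' ∉ F}), θ (cfg t) (x : E) ^ 2 := by
              rw [← tsum_subtype]
              exact (Equiv.tsum_eq (Equiv.subtypeEquivRight (fun x => by simp))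
                (fun x : ↥((↑F : Set E)ᶜ) => θ (cfg t) (x : E) ^ 2)).symm
            have h5 : f (cfg t) = Network.energy (cfg t) (θ (cfg t)) := (hmin (cfg t) hrtS).symm
            have htail0 : 0 ≤ ∑' (x : {e' : E // e' ∉ F}), θ (cfg t) (x : E) ^ 2 :=
              tsum_nonneg fun x => sq_nonneg _
            have h4 : Gf t' ≤ Gf t
                + (b - a) * ∑' (x : {e' : E // e' ∉ F}), θ (cfg t) (x : E) ^ 2 := by
              have hGf' : Gf t' = f (cfg t') := rfl
              have hGf : Gf t = f (cfg t) := rfl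
              rw [hGf', hGf, h5]
              rw [h3] at h2
              linarith
            have h6 : (b - a) * ∑' (x : {e' : E // e' ∉ F}), θ (cfg t) (x : E) ^ 2
                < c - Gf t := by
              have h7 : (b - a) * ∑' (x : {e' : E // e' ∉ F}), θ (cfg t) (x : E) ^ 2
                  ≤ (b - a + 1) * ∑' (x : {e' : E // e' ∉ F}), θ (cfg t) (x : E) ^ 2 :=
                mul_le_mul_of_nonneg_right (by linarith) htail0
              have h8 : (b - a + 1) * ∑' (x : {e' : E // e' ∉ F}), θ (cfg t) (x : E) ^ 2
                  < (b - a + 1) * ((c - Gf t)/(b - a + 1)) :=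
                mul_lt_mul_of_pos_left hF hba1
              have h9 : (b - a + 1) * ((c - Gf t)/(b - a + 1)) = c - Gf t := by
                field_simp
              linarith
            show Gf t' < c
            linarith
          haveI : BorelSpace Bool := ⟨borel_eq_top_of_discrete.symm⟩
          haveI : BorelSpace (↥W → Bool) := Pi.borelSpace
          have hGm : Measurable Gf :=
            measurable_of_Iio fun y =>
              ((upperSemicontinuous_iff_isOpen_preimage.1 husc y)).measurableSet
          set pmap : (E → ℝ) → (↥W → Bool) :=
            fun r i => if r (i : E) = b then true else false with hpmapdef
          have hpm : Measurable pmap := by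
            apply measurable_pi_lambda
            intro i
            have hms : MeasurableSet {r : E → ℝ | r (i : E) = b} := by
              have : {r : E → ℝ | r (i : E) = b}
                  = (fun r : E → ℝ => r (i : E)) ⁻¹' {b} := rfl
              rw [this]
              exact (measurable_pi_apply _) (measurableSet_singleton b)
            exact Measurable.ite hms measurable_const measurable_const
          have hkey : ∀ r : E → ℝ, (∀ e' ∈ W, r e' = a ∨ r e' = b) → f r = Gf (pmap r) := by
            intro r hr
            apply hdet
            intro e' he'
            show r e' = (if h : e' ∈ W then
              (if (if r e' = b then true else false) = true then b else a) else b)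
            rw [dif_pos he']
            rcases hr e' he' with hra | hrb
            · by_cases hb' : r e' = b
              · simp [hb']
              · simp [hb', hra]
            · simp [hrb]
          have hae : f =ᵐ[μ] (fun r => Gf (pmap r)) := by
            have h0 := measure_eq_zero_iff_ae_notMem.1 (omega_null hmarg' hWc)
            filter_upwards [h0] with r hr
            simp only [Set.mem_setOf_eq, not_not] at hr
            exact hkey r hr
          exact ((hGm.comp hpm).aestronglyMeasurable.congr hae.symm)
        · -- uncountably many flexible edges: the integrand vanishes a.e.
          have hgmm : Measurable (hGa.mk _) := hGa.measurable_mk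
          have haeG : (fun r => (grad a b f e r)^2) =ᵐ[μ] hGa.mk _ := hGa.ae_eq_mk
          set gm : (E → ℝ) → ℝ := hGa.mk _ with hgmdef
          set Nset := toMeasurable μ {r | (grad a b f e r)^2 ≠ gm r} with hNdef
          have hNnull : μ Nset = 0 := by
            rw [hNdef, measure_toMeasurable]
            exact haeG
          have hNsub : {r | (grad a b f e r)^2 ≠ gm r} ⊆ Nset := subset_toMeasurable μ _
          have hz : μ {r | gm r ≠ 0} = 0 := by
            by_contra hz
            obtain ⟨C₁, hC₁c, hdet₁⟩ := measurable_det hgmm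
            obtain ⟨C₂, hC₂c, hdet₂⟩ := measurableSet_det (measurableSet_toMeasurable μ _)
            set D : Set E := C₁ ∪ C₂ ∪ {e} with hDdef
            have hDc : D.Countable := (hC₁c.union hC₂c).union (Set.countable_singleton e)
            have heD : e ∈ D := Set.mem_union_right _ rfl
            set T : Set (E → ℝ) := {r | gm r ≠ 0} \ Nset with hTdef
            have hTm : μ T ≠ 0 := by
              rw [hTdef, measure_diff_null hNnull]
              exact hz
            have h1 : μ (T \ {r : E → ℝ | ¬ ∀ e' ∈ D, r e' = a ∨ r e' = b}) = μ T :=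
              measure_diff_null (omega_null hmarg' hDc)
            have h2 : (T \ {r : E → ℝ | ¬ ∀ e' ∈ D, r e' = a ∨ r e' = b}).Nonempty := by
              rw [Set.nonempty_iff_ne_empty]
              intro hemp
              rw [hemp, measure_empty] at h1
              exact hTm h1.symm
            obtain ⟨r₀, hr₀T, hr₀Ω⟩ := h2
            simp only [Set.mem_setOf_eq, not_not] at hr₀Ω
            rw [hTdef, Set.mem_diff] at hr₀T
            obtain ⟨hr₀ne, hr₀N⟩ := hr₀T
            -- the sequence of flexible edges with witness flows
            have hpick : ∀ C : Set E, C.Countable → ∃ p : E × (E → ℝ),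
                p.1 ∉ C ∧ N.IsUnitFlow p.2 A Z ∧ p.2 p.1 ≠ 0 := by
              intro C hC
              have hns : ¬ U₂ ⊆ C := fun hsub => hU (hC.mono hsub)
              obtain ⟨e', he'U, he'C⟩ := Set.not_subset.1 hns
              obtain ⟨ψ₁, ψ₂, hψ₁, hψ₂, hne⟩ := he'U
              by_cases h0 : ψ₁ e' = 0
              · refine ⟨(e', ψ₂), he'C, hψ₂, ?_⟩
                show ψ₂ e' ≠ 0
                intro hc
                exact hne (h0.trans hc.symm)
              · refine ⟨(e', ψ₁), he'C, hψ₁, ?_⟩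
                show ψ₁ e' ≠ 0
                exact h0
            choose pickf hpick1 hpick2 hpick3 using hpick
            set pick : Set E → E × (E → ℝ) := fun C =>
              if h : C.Countable then pickf C h else (e, fun _ => 0) with hpickdef
            set sq : ℕ → E × (E → ℝ) := seqAux pick D with hsqdef
            set Cs : ℕ → Set E := fun n => D ∪ ⋃ m ∈ Finset.range n,
              ({(sq m).1} ∪ Function.support (sq m).2) with hCsdef
            have hsqn : ∀ n, sq n = pick (Cs n) := by
              intro n
              rw [hCsdef, hsqdef]
              exact seqAux_def pick D n
            have hmaster : ∀ n, (Cs n).Countable ∧ N.IsUnitFlow (sq n).2 A Z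
                ∧ (sq n).1 ∉ Cs n ∧ (sq n).2 ((sq n).1) ≠ 0 := by
              intro n
              induction n using Nat.strong_induction_on with
              | _ n ih =>
                have hCc : (Cs n).Countable := by
                  rw [hCsdef]
                  refine hDc.union (Set.countable_iUnion fun m =>
                    Set.countable_iUnion fun hm => ?_)
                  obtain ⟨-, hUF, -, -⟩ := ih m (Finset.mem_range.1 hm)
                  refine (Set.countable_singleton _).union ?_
                  have hsum := hwild _ hUF
                  have hsupp_eq : Function.support (fun e' => (sq m).2 e' ^ 2)
                      = Function.support ((sq m).2) := by
                    ext e'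
                    simp [Function.mem_support, pow_eq_zero_iff]
                  rw [← hsupp_eq]
                  exact hsum.countable_support
                have hp : pick (Cs n) = pickf (Cs n) hCc := by
                  rw [hpickdef]
                  simp only [dif_pos hCc]
                have h1 := hpick1 (Cs n) hCc
                have h2 := hpick2 (Cs n) hCc
                have h3 := hpick3 (Cs n) hCc
                rw [← hp, ← hsqn n] at h1 h2 h3
                exact ⟨hCc, h2, h1, h3⟩
            have hUFn : ∀ n, N.IsUnitFlow (sq n).2 A Z := fun n => (hmaster n).2.1
            have hnotD : ∀ n, (sq n).1 ∉ D := by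
              intro n hD
              exact (hmaster n).2.2.1 (by rw [hCsdef]; exact Set.mem_union_left _ hD)
            have hinj : ∀ m n, m < n → (sq n).1 ≠ (sq m).1 := by
              intro m n hmn heq
              apply (hmaster n).2.2.1
              rw [hCsdef]
              refine Set.mem_union_right _ (Set.mem_iUnion.2 ⟨m, Set.mem_iUnion.2
                ⟨Finset.mem_range.2 hmn, Set.mem_union_left _ ?_⟩⟩)
              exact heq
            have hzero : ∀ m n, m < n → (sq m).2 ((sq n).1) = 0 := by
              intro m n hmn
              by_contra hne
              apply (hmaster n).2.2.1
              rw [hCsdef]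
              exact Set.mem_union_right _ (Set.mem_iUnion.2 ⟨m, Set.mem_iUnion.2
                ⟨Finset.mem_range.2 hmn, Set.mem_union_right _ (Function.mem_support.2 hne)⟩⟩)
            have hκpos : ∀ n, 0 < ((sq n).2 ((sq n).1))^2 :=
              fun n => lt_of_le_of_ne (sq_nonneg _) (Ne.symm (pow_ne_zero 2 (hmaster n).2.2.2))
            have hsumn : ∀ n, Summable (fun e' => (sq n).2 e' ^ 2) := fun n => hwild _ (hUFn n)
            have hb0 : (0:ℝ) < b := lt_of_lt_of_le ha hab
            set Yf : ℕ → ℝ := fun n =>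
              (1 + n + 3 * b * (∑' e', (sq n).2 e' ^ 2)) / ((sq n).2 ((sq n).1))^2 with hYdef
            have hSψ0 : ∀ n, (0:ℝ) ≤ ∑' e', (sq n).2 e' ^ 2 :=
              fun n => tsum_nonneg fun _ => sq_nonneg _
            have hY0 : ∀ n, 0 < Yf n := by
              intro n
              apply div_pos _ (hκpos n)
              have h1 := hSψ0 n
              have h2 : (0:ℝ) ≤ n := Nat.cast_nonneg n
              nlinarith
            set ρ0 : E → ℝ := fun e'' => if h : ∃ i : ℕ, (sq i).1 = e''
              then -(Yf (Nat.find h)) else (if e'' ∈ D then r₀ e'' else b) with hρ0def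
            have hρen : ∀ i, ρ0 ((sq i).1) = -(Yf i) := by
              intro i
              have hex : ∃ j : ℕ, (sq j).1 = (sq i).1 := ⟨i, rfl⟩
              show (if h : ∃ j : ℕ, (sq j).1 = (sq i).1 then -(Yf (Nat.find h))
                else (if (sq i).1 ∈ D then r₀ ((sq i).1) else b)) = -(Yf i)
              rw [dif_pos hex]
              have hfind : Nat.find hex = i := by
                have hspec := Nat.find_spec hex
                rcases lt_trichotomy (Nat.find hex) i with h | h | h
                · exact absurd hspec.symm (hinj (Nat.find hex) i h)
                · exact h
                · exact absurd hspec (hinj i (Nat.find hex) h)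
              rw [hfind]
            have hρD : ∀ e'' ∈ D, ρ0 e'' = r₀ e'' := by
              intro e'' hD
              have hnex : ¬ ∃ i : ℕ, (sq i).1 = e'' := by
                rintro ⟨i, rfl⟩
                exact hnotD i hD
              show (if h : ∃ i : ℕ, (sq i).1 = e'' then -(Yf (Nat.find h))
                else (if e'' ∈ D then r₀ e'' else b)) = r₀ e''
              rw [dif_neg hnex, if_pos hD]
            have hρoffS : ∀ e'', (¬ ∃ i : ℕ, (sq i).1 = e'') → (ρ0 e'' = a ∨ ρ0 e'' = b) := by
              intro e'' hnex
              have hval : ρ0 e'' = (if e'' ∈ D then r₀ e'' else b) := by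
                show (if h : ∃ i : ℕ, (sq i).1 = e'' then -(Yf (Nat.find h))
                  else (if e'' ∈ D then r₀ e'' else b)) = _
                rw [dif_neg hnex]
              rw [hval]
              by_cases hD : e'' ∈ D
              · rw [if_pos hD]
                exact hr₀Ω e'' hD
              · rw [if_neg hD]
                exact Or.inr rfl
            -- the key unboundedness claim
            have hnb : ∀ ρh : E → ℝ, (∀ i, ρh ((sq i).1) = -(Yf i)) →
                (∀ e'', (¬ ∃ i : ℕ, (sq i).1 = e'') → (ρh e'' = a ∨ ρh e'' = b)) →
                f ρh = 0 := by
              intro ρh hρh1 hρh2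
              have hEb : ∀ i : ℕ, Network.energy ρh ((sq i).2) ≤ -(1 + (i:ℝ)) := by
                intro i
                have hCi_Y : ∀ j, j ≤ i → Yf j ≤ b + ∑ j' ∈ Finset.range (i+1), Yf j' := by
                  intro j hj
                  have h1 : Yf j ≤ ∑ j' ∈ Finset.range (i+1), Yf j' :=
                    Finset.single_le_sum (fun j' _ => (hY0 j').le)
                      (Finset.mem_range.2 (by omega))
                  linarith
                set Ci : ℝ := b + ∑ j' ∈ Finset.range (i+1), Yf j' with hCidef
                have hCi_b : b ≤ Ci :=
                  le_add_of_nonneg_right (Finset.sum_nonneg fun j' _ => (hY0 j').le)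
                have habs : ∀ e'', |ρh e'' * (sq i).2 e'' ^ 2| ≤ Ci * (sq i).2 e'' ^ 2 := by
                  intro e''
                  by_cases hex : ∃ j : ℕ, (sq j).1 = e''
                  · obtain ⟨j, rfl⟩ := hex
                    rcases le_or_gt j i with hji | hij
                    · rw [abs_mul, abs_of_nonneg (sq_nonneg ((sq i).2 ((sq j).1)))]
                      apply mul_le_mul_of_nonneg_right _ (sq_nonneg _)
                      rw [hρh1 j, abs_neg, abs_of_pos (hY0 j)]
                      exact hCi_Y j hji
                    · rw [hzero i j hij]
                      norm_num
                  · rw [abs_mul, abs_of_nonneg (sq_nonneg ((sq i).2 e''))]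
                    apply mul_le_mul_of_nonneg_right _ (sq_nonneg _)
                    rcases hρh2 e'' hex with h | h
                    · rw [h, abs_of_pos ha]
                      linarith
                    · rw [h, abs_of_pos hb0]
                      exact hCi_b
                have hsummE : Summable (fun e'' => ρh e'' * (sq i).2 e'' ^ 2) := by
                  rw [← summable_abs_iff]
                  exact Summable.of_nonneg_of_le (fun _ => abs_nonneg _) habs
                    ((hsumn i).mul_left Ci)
                have hgsum : Summable (fun e'' : E => if e'' = (sq i).1
                    then -(Yf i + b) * ((sq i).2 ((sq i).1))^2 else 0) := by
                  apply summable_of_ne_finset_zero (s := {(sq i).1})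
                  intro e'' he''
                  simp only [Finset.mem_singleton] at he''
                  simp [he'']
                have hsummM : Summable (fun e'' => b * (sq i).2 e'' ^ 2
                    + (if e'' = (sq i).1 then -(Yf i + b) * ((sq i).2 ((sq i).1))^2 else 0)) :=
                  ((hsumn i).mul_left b).add hgsum
                have hpt : ∀ e'', ρh e'' * (sq i).2 e'' ^ 2
                    ≤ b * (sq i).2 e'' ^ 2
                      + (if e'' = (sq i).1 then -(Yf i + b) * ((sq i).2 ((sq i).1))^2 else 0) := by
                  intro e''
                  by_cases he : e'' = (sq i).1
                  · subst he
                    rw [if_pos rfl, hρh1 i]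
                    exact le_of_eq (by ring)
                  · rw [if_neg he, add_zero]
                    by_cases hex : ∃ j : ℕ, (sq j).1 = e''
                    · obtain ⟨j, rfl⟩ := hex
                      rw [hρh1 j]
                      nlinarith [hY0 j, hb0, sq_nonneg ((sq i).2 ((sq j).1))]
                    · rcases hρh2 e'' hex with h | h
                      · rw [h]
                        exact mul_le_mul_of_nonneg_right hab (sq_nonneg _)
                      · rw [h]
                have hle := Summable.tsum_le_tsum hpt hsummE hsummM
                have hMtsum : (∑' e'', (b * (sq i).2 e'' ^ 2
                    + (if e'' = (sq i).1 then -(Yf i + b) * ((sq i).2 ((sq i).1))^2 else 0)))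
                    = b * (∑' e', (sq i).2 e' ^ 2)
                      + -(Yf i + b) * ((sq i).2 ((sq i).1))^2 := by
                  rw [Summable.tsum_add ((hsumn i).mul_left b) hgsum, tsum_mul_left, tsum_ite_eq]
                have hYκ : Yf i * ((sq i).2 ((sq i).1))^2
                    = 1 + i + 3 * b * (∑' e', (sq i).2 e' ^ 2) := by
                  have hκne : ((sq i).2 ((sq i).1))^2 ≠ 0 := ne_of_gt (hκpos i)
                  rw [hYdef]
                  field_simp
                  exact div_self (hmaster i).2.2.2
                have hfin : Network.energy ρh ((sq i).2)
                    = ∑' e'', ρh e'' * (sq i).2 e'' ^ 2 := rfl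
                rw [hfin]
                have hκ0 : (0:ℝ) ≤ ((sq i).2 ((sq i).1))^2 := sq_nonneg _
                have hS0 := hSψ0 i
                calc (∑' e'', ρh e'' * (sq i).2 e'' ^ 2)
                    ≤ ∑' e'', (b * (sq i).2 e'' ^ 2 + (if e'' = (sq i).1
                        then -(Yf i + b) * ((sq i).2 ((sq i).1))^2 else 0)) := hle
                  _ = b * (∑' e', (sq i).2 e' ^ 2)
                      + -(Yf i + b) * ((sq i).2 ((sq i).1))^2 := hMtsum
                  _ ≤ -(1 + (i:ℝ)) := by
                      nlinarith [hYκ, mul_nonneg hb0.le hS0, mul_nonneg hb0.le hκ0]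
              have hnbb : ¬ BddBelow (ESet N A Z ρh) := by
                rintro ⟨m, hm⟩
                obtain ⟨n, hn⟩ := exists_nat_gt (-m)
                have hmem : Network.energy ρh ((sq n).2) ∈ ESet N A Z ρh :=
                  ⟨(sq n).2, hUFn n, rfl⟩
                have h1 := hm hmem
                have h2 := hEb n
                linarith
              show N.effRes ρh A Z = 0
              rw [effRes_eq_sInf]
              exact Real.sInf_of_not_bddBelow hnbb
            have hρ0f : f ρ0 = 0 := hnb ρ0 hρen hρoffS
            have hfen : ∀ i, (flipEdge a b ρ0 e) ((sq i).1) = -(Yf i) := by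
              intro i
              rw [flipEdge_apply_ne _ (fun hc => hnotD i (by rw [hc]; exact heD))]
              exact hρen i
            have hfoff : ∀ e'', (¬ ∃ i : ℕ, (sq i).1 = e'') →
                ((flipEdge a b ρ0 e) e'' = a ∨ (flipEdge a b ρ0 e) e'' = b) := by
              intro e'' hnex
              by_cases he : e'' = e
              · subst he
                rw [flipEdge_apply_self]
                rw [hρD e'' heD]
                rcases hr₀Ω e'' heD with h | h
                · rw [h]; right; ring
                · rw [h]; left; ring
              · rw [flipEdge_apply_ne _ he]
                exact hρoffS e'' hnex
            have hρflipf : f (flipEdge a b ρ0 e) = 0 := hnb _ hfen hfoff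
            have hG0 : (grad a b f e ρ0)^2 = 0 := by
              have h1 : grad a b f e ρ0 = (f ρ0 - f (flipEdge a b ρ0 e))/2 := rfl
              rw [h1, hρ0f, hρflipf]
              norm_num
            have hgmρ : gm ρ0 = gm r₀ :=
              hdet₁ ρ0 r₀ (fun e' h => hρD e' (Set.mem_union_left _ (Set.mem_union_left _ h)))
            have hρN : ρ0 ∉ Nset := by
              intro hmem
              apply hr₀N
              exact (hdet₂ ρ0 r₀ (fun e' h => hρD e'
                (Set.mem_union_left _ (Set.mem_union_right _ h)))).1 hmem
            have hGgm : (grad a b f e ρ0)^2 = gm ρ0 := by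
              by_contra hc
              exact hρN (hNsub hc)
            rw [hG0, hgmρ] at hGgm
            exact hr₀ne hGgm.symm
          have hgm0 : gm =ᵐ[μ] (fun _ => (0:ℝ)) := by
            filter_upwards [measure_eq_zero_iff_ae_notMem.1 hz] with r hr
            simpa using hr
          have hfin : (fun r => (grad a b f e r)^2) =ᵐ[μ] (fun _ => (0:ℝ)) := haeG.trans hgm0
          rw [integral_congr_ae hfin, integral_zero]
    calc ∑' e : E, ∫ r, (grad a b f e r)^2 ∂μ = ∑' e : E, (0:ℝ) := tsum_congr hLHS
      _ = 0 := tsum_zero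
      _ ≤ (b - a)^2/(2*a) * ∫ r, f r ∂μ := by
          rw [hRHS, mul_zero]
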